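/- Let G be a finite simple undirected graph, let (s_1,t_1),…,(s_r,t_r) be pairs of vertices of G, and let p ∈ ℕ. Let G' be the graph obtained from G by adding, for each i ∈ [r], two new vertices s_i' and t_i', together with p+1 new paths of length two from s_i' to s_i whose middle vertices are new and pairwise distinct, and p+1 new paths of length two from t_i' to t_i whose middle vertices are new and pairwise distinct. Then G has a multicut of size at most p for the cut requests {{s_i,t_i} : i ∈ [r]} if and only if G' has a multicut of size at most p for the cut requests {{s_i',t_i'} : i ∈ [r]}. -/

import Mathlib

open Finset

variable {V : Type}

/-- Total capacity of a terminal set: sum of degrees. -/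
def capacity [Fintype V] (G : SimpleGraph V) [DecidableRel G.Adj] (T : Finset V) : ℕ :=
  ∑ t ∈ T, G.degree t

/-- `P` is a partition of the set `T` into nonempty parts. -/
def IsPartitionOn (T : Set V) (P : Set (Set V)) : Prop :=
  (∀ p ∈ P, p.Nonempty ∧ p ⊆ T) ∧ ∀ t ∈ T, ∃! p, p ∈ P ∧ t ∈ p

/-- `X` is a multiway cut for the partition `P` in `G`: no component of `G - X`
contains terminals from two distinct parts. -/
def IsMultiwayCut (G : SimpleGraph V) (P : Set (Set V)) (X : Finset (Sym2 V)) : Prop :=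
  ↑X ⊆ G.edgeSet ∧ ∀ u v : V, ∀ p ∈ P, ∀ q ∈ P, u ∈ p → v ∈ q →
    (G.deleteEdges ↑X).Reachable u v → p = q

def IsMinMultiwayCut (G : SimpleGraph V) (P : Set (Set V)) (X : Finset (Sym2 V)) : Prop :=
  IsMultiwayCut G P X ∧ ∀ Y : Finset (Sym2 V), IsMultiwayCut G P Y → X.card ≤ Y.card

/-- `R` is a set of cut requests over `T`: unordered pairs of distinct terminals. -/
def CutRequests (T : Set V) (R : Set (Sym2 V)) : Prop :=
  ∀ r ∈ R, ¬ r.IsDiag ∧ ∀ v ∈ r, v ∈ T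

/-- `X` is a multicut for the requests `R` in `G`. -/
def IsMulticut (G : SimpleGraph V) (R : Set (Sym2 V)) (X : Finset (Sym2 V)) : Prop :=
  ↑X ⊆ G.edgeSet ∧ ∀ u v : V, s(u, v) ∈ R → ¬ (G.deleteEdges ↑X).Reachable u v

def IsMinMulticut (G : SimpleGraph V) (R : Set (Sym2 V)) (X : Finset (Sym2 V)) : Prop :=
  IsMulticut G R X ∧ ∀ Y : Finset (Sym2 V), IsMulticut G R Y → X.card ≤ Y.card

/-- An edge is essential for `(G,T)` if for some set of cut requests over `T`,
every minimum multicut contains it. -/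
def Essential (G : SimpleGraph V) (T : Set V) (e : Sym2 V) : Prop :=
  ∃ R : Set (Sym2 V), CutRequests T R ∧ ∀ X : Finset (Sym2 V), IsMinMulticut G R X → e ∈ X

/-- The edge boundary of `S`: edges with exactly one endpoint in `S`. -/
def edgeBoundary [Fintype V] [DecidableEq V] (G : SimpleGraph V) [DecidableRel G.Adj]
    (S : Finset V) : Finset (Sym2 V) :=
  G.edgeFinset.filter (fun e => ∃ u v : V, e = s(u, v) ∧ u ∈ S ∧ v ∉ S)

/-- `cap_T(S) = cap_G(T ∩ S) + δ_G(S)`. -/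
def capT [Fintype V] [DecidableEq V] (G : SimpleGraph V) [DecidableRel G.Adj]
    (T S : Finset V) : ℕ :=
  capacity G (T ∩ S) + (edgeBoundary G S).card

/-- `X` is an `(A,B)`-edge cut in `G`. -/
def IsEdgeCut (G : SimpleGraph V) (A B : Finset V) (X : Finset (Sym2 V)) : Prop :=
  ↑X ⊆ G.edgeSet ∧ ∀ a ∈ A, ∀ b ∈ B, ¬ (G.deleteEdges ↑X).Reachable a b

def IsMinEdgeCut (G : SimpleGraph V) (A B : Finset V) (X : Finset (Sym2 V)) : Prop :=
  IsEdgeCut G A B X ∧ ∀ Y : Finset (Sym2 V), IsEdgeCut G A B Y → X.card ≤ Y.card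


/-- The closed neighborhood `N_G[S]`. -/
def closedNbhd (G : SimpleGraph V) (S : Set V) : Set V :=
  S ∪ {v | ∃ u ∈ S, G.Adj u v}

/-- The (exterior) open neighborhood `N_G(S)`. -/
def extNbhd [Fintype V] [DecidableEq V] (G : SimpleGraph V) [DecidableRel G.Adj]
    (S : Finset V) : Finset V :=
  Finset.univ.filter (fun v => v ∉ S ∧ ∃ u ∈ S, G.Adj u v)

/-- The graph `G_S`: the edges of `G` with at least one endpoint in `S`
(vertices outside `N_G[S]` are isolated). -/
def recGraph [DecidableEq V] (G : SimpleGraph V) (S : Finset V) : SimpleGraph V where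
  Adj u v := G.Adj u v ∧ (u ∈ S ∨ v ∈ S)
  symm := by constructor; intro u v h; exact ⟨h.1.symm, h.2.symm⟩
  loopless := by constructor; intro v h; exact G.irrefl h.1

instance [DecidableEq V] (G : SimpleGraph V) [DecidableRel G.Adj] (S : Finset V) :
    DecidableRel (recGraph G S).Adj :=
  fun u v => inferInstanceAs (Decidable (G.Adj u v ∧ (u ∈ S ∨ v ∈ S)))

/-- The terminal set `T(S) = (T ∩ S) ∪ N_G(S)` of the recursive instance at `S`. -/
def recTerminals [Fintype V] [DecidableEq V] (G : SimpleGraph V) [DecidableRel G.Adj]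
    (T S : Finset V) : Finset V :=
  (T ∩ S) ∪ extNbhd G S

/-- An indexed partition `T = T_1 ∪ ... ∪ T_s` of `T` into nonempty disjoint parts. -/
def IsIndexedPartition [DecidableEq V] (T : Finset V) {s : ℕ} (Tp : Fin s → Finset V) : Prop :=
  (∀ i, (Tp i).Nonempty) ∧ (∀ i j, i ≠ j → Disjoint (Tp i) (Tp j)) ∧
    Finset.univ.biUnion Tp = T

def IsMultiwayCutFam (G : SimpleGraph V) {s : ℕ} (Tp : Fin s → Finset V)
    (X : Finset (Sym2 V)) : Prop :=
  ↑X ⊆ G.edgeSet ∧ ∀ i j : Fin s, i ≠ j → ∀ u ∈ Tp i, ∀ v ∈ Tp j,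
    ¬ (G.deleteEdges ↑X).Reachable u v

/-- The set `E(T,V)` of edges incident to at least one terminal. -/
def terminalEdges [Fintype V] [DecidableEq V] (G : SimpleGraph V) [DecidableRel G.Adj]
    (T : Finset V) : Finset (Sym2 V) :=
  G.edgeFinset.filter (fun e => ∃ t ∈ T, t ∈ e)

/-- Independence of the columns indexed by the finite set `X` in the
linear representation `v`. -/
def FIndep (F : Type) [Field F] {W E : Type} [AddCommGroup W] [Module F W]
    (v : E → W) (X : Finset E) : Prop :=
  LinearIndependent F (fun x : {a // a ∈ X} => v x.1)


/-- The auxiliary vertex type for the multicut gadget: original vertices, the new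
terminals `s_i'`/`t_i'` (indexed by `Fin r × Bool`), and the `p+1` middle vertices of
the new length-two paths on each side. -/
abbrev GadgetV (V : Type) (r p : ℕ) : Type :=
  V ⊕ ((Fin r × Bool) ⊕ (Fin r × Bool × Fin (p + 1)))

/-- The gadget graph `G'`: `G` together with, for each `i` and each side
`b : Bool` (`false` for `s_i`, `true` for `t_i`), `p+1` internally disjoint paths of
length two from the new terminal `(i,b)` through a middle vertex `(i,b,j)` to the
original vertex (`s_i` or `t_i`). -/
def gadgetGraph (G : SimpleGraph V) (r p : ℕ) (sv tv : Fin r → V) :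
    SimpleGraph (GadgetV V r p) :=
  SimpleGraph.fromRel (fun a b =>
    (∃ u w : V, a = Sum.inl u ∧ b = Sum.inl w ∧ G.Adj u w) ∨
    (∃ (i : Fin r) (c : Bool) (j : Fin (p + 1)),
      a = Sum.inr (Sum.inr (i, c, j)) ∧ b = Sum.inr (Sum.inl (i, c))) ∨
    (∃ (i : Fin r) (c : Bool) (j : Fin (p + 1)),
      a = Sum.inr (Sum.inr (i, c, j)) ∧ b = Sum.inl (if c then tv i else sv i)))

/-- Projection of gadget vertices back to `V`. -/
def gProj {r p : ℕ} (sv tv : Fin r → V) : GadgetV V r p → V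
  | Sum.inl u => u
  | Sum.inr (Sum.inl (i, c)) => if c then tv i else sv i
  | Sum.inr (Sum.inr (i, c, _)) => if c then tv i else sv i

lemma gadget_adj_cases {G : SimpleGraph V} {r p : ℕ} {sv tv : Fin r → V}
    {a b : GadgetV V r p} (h : (gadgetGraph G r p sv tv).Adj a b) :
    (∃ u w : V, a = Sum.inl u ∧ b = Sum.inl w ∧ G.Adj u w) ∨
      gProj sv tv a = gProj sv tv b := by
  rw [gadgetGraph, SimpleGraph.fromRel_adj] at h
  obtain ⟨-, h | h⟩ := h
  · rcases h with ⟨u, w, rfl, rfl, hadj⟩ | ⟨i, c, j, rfl, rfl⟩ | ⟨i, c, j, rfl, rfl⟩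
    · exact Or.inl ⟨u, w, rfl, rfl, hadj⟩
    · exact Or.inr rfl
    · exact Or.inr rfl
  · rcases h with ⟨u, w, rfl, rfl, hadj⟩ | ⟨i, c, j, rfl, rfl⟩ | ⟨i, c, j, rfl, rfl⟩
    · exact Or.inl ⟨w, u, rfl, rfl, hadj.symm⟩
    · exact Or.inr rfl
    · exact Or.inr rfl

lemma gadget_proj_reach {G : SimpleGraph V} {r p : ℕ}
    [DecidableEq (Sym2 (GadgetV V r p))] {sv tv : Fin r → V}
    {X : Finset (Sym2 V)} {a b : GadgetV V r p}
    (h : ((gadgetGraph G r p sv tv).deleteEdges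
        ↑(X.image (Sym2.map (Sum.inl : V → GadgetV V r p)))).Reachable a b) :
    (G.deleteEdges ↑X).Reachable (gProj sv tv a) (gProj sv tv b) := by
  obtain ⟨w⟩ := h
  induction w with
  | nil => exact SimpleGraph.Reachable.refl _
  | cons hadj _ ih =>
    refine SimpleGraph.Reachable.trans ?_ ih
    rw [SimpleGraph.deleteEdges_adj] at hadj
    obtain ⟨hadj, hne⟩ := hadj
    rcases gadget_adj_cases hadj with ⟨u, w, rfl, rfl, huw⟩ | heq
    · refine SimpleGraph.Adj.reachable ?_
      rw [SimpleGraph.deleteEdges_adj]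
      refine ⟨huw, fun hx => hne ?_⟩
      refine Finset.mem_coe.2 (Finset.mem_image.2 ⟨s(u, w), Finset.mem_coe.1 hx, ?_⟩)
      simp [Sym2.map_pair_eq]
    · rw [heq]

lemma gadget_lift_reach {G : SimpleGraph V} {r p : ℕ} {sv tv : Fin r → V}
    {X : Finset (Sym2 V)} {X' : Finset (Sym2 (GadgetV V r p))}
    (hXX : ∀ u w : V, G.Adj u w → s(u, w) ∉ X →
      s((Sum.inl u : GadgetV V r p), Sum.inl w) ∉ X')
    {a b : V} (h : (G.deleteEdges ↑X).Reachable a b) :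
    ((gadgetGraph G r p sv tv).deleteEdges ↑X').Reachable
      (Sum.inl a) (Sum.inl b) := by
  obtain ⟨w⟩ := h
  induction w with
  | nil => exact SimpleGraph.Reachable.refl _
  | cons hadj _ ih =>
    refine SimpleGraph.Reachable.trans (SimpleGraph.Adj.reachable ?_) ih
    rw [SimpleGraph.deleteEdges_adj] at hadj ⊢
    obtain ⟨hadj, hne⟩ := hadj
    refine ⟨?_, fun hx => hXX _ _ hadj (fun hm => hne (Finset.mem_coe.2 hm))
      (Finset.mem_coe.1 hx)⟩
    rw [gadgetGraph, SimpleGraph.fromRel_adj]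
    exact ⟨by simp [hadj.ne], Or.inl (Or.inl ⟨_, _, rfl, rfl, hadj⟩)⟩

lemma gadget_term_reach {G : SimpleGraph V} {r p : ℕ} {sv tv : Fin r → V}
    {X' : Finset (Sym2 (GadgetV V r p))} (hcard : X'.card ≤ p)
    (i : Fin r) (c : Bool) :
    ((gadgetGraph G r p sv tv).deleteEdges ↑X').Reachable
      (Sum.inr (Sum.inl (i, c))) (Sum.inl (if c then tv i else sv i)) := by
  classical
  set term : GadgetV V r p := Sum.inr (Sum.inl (i, c)) with hterm
  set att : GadgetV V r p := Sum.inl (if c then tv i else sv i) with hatt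
  have key : ∃ j : Fin (p + 1),
      s(term, Sum.inr (Sum.inr (i, c, j))) ∉ X' ∧
      s((Sum.inr (Sum.inr (i, c, j)) : GadgetV V r p), att) ∉ X' := by
    by_contra hcon
    push_neg at hcon
    set f : Fin (p + 1) → Sym2 (GadgetV V r p) := fun j =>
      if s(term, Sum.inr (Sum.inr (i, c, j))) ∈ X' then
        s(term, Sum.inr (Sum.inr (i, c, j)))
      else s((Sum.inr (Sum.inr (i, c, j)) : GadgetV V r p), att) with hf
    have hfm : ∀ j, f j ∈ X' := by
      intro j
      by_cases hm : s(term, Sum.inr (Sum.inr (i, c, j))) ∈ X'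
      · simpa [hf, hm] using hm
      · simpa [hf, hm] using hcon j hm
    have hmem : ∀ j, (Sum.inr (Sum.inr (i, c, j)) : GadgetV V r p) ∈ f j := by
      intro j
      by_cases hm : s(term, Sum.inr (Sum.inr (i, c, j))) ∈ X' <;> simp [hf, hm]
    have hinj : Function.Injective f := by
      intro j j' hjj
      have h1 := hmem j'
      rw [← hjj] at h1
      by_cases hm : s(term, Sum.inr (Sum.inr (i, c, j))) ∈ X' <;>
        simp only [hf, hm, if_pos, if_neg, not_false_iff] at h1 <;>
        rw [Sym2.mem_iff] at h1 <;>
        rcases h1 with h1 | h1 <;> simp_all [term, att]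
    have := Finset.card_le_card_of_injOn (s := (Finset.univ : Finset (Fin (p + 1))))
        (t := X') f (fun j _ => hfm j) hinj.injOn
    simp at this
    omega
  obtain ⟨j, h1, h2⟩ := key
  have a1 : ((gadgetGraph G r p sv tv).deleteEdges ↑X').Adj term
      (Sum.inr (Sum.inr (i, c, j))) := by
    rw [SimpleGraph.deleteEdges_adj]
    refine ⟨?_, fun hx => h1 (Finset.mem_coe.1 hx)⟩
    rw [gadgetGraph, SimpleGraph.fromRel_adj]
    exact ⟨by simp [hterm], Or.inr (Or.inr (Or.inl ⟨i, c, j, rfl, rfl⟩))⟩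
  have a2 : ((gadgetGraph G r p sv tv).deleteEdges ↑X').Adj
      (Sum.inr (Sum.inr (i, c, j))) att := by
    rw [SimpleGraph.deleteEdges_adj]
    refine ⟨?_, fun hx => h2 (Finset.mem_coe.1 hx)⟩
    rw [gadgetGraph, SimpleGraph.fromRel_adj]
    exact ⟨by simp [hatt], Or.inl (Or.inr (Or.inr ⟨i, c, j, rfl, rfl⟩))⟩
  exact a1.reachable.trans a2.reachable

/-- `G` has a multicut of size at most `p` for the requests
`{{s_i,t_i}}` iff the gadget graph `G'` has a multicut of size at most `p` for the
requests `{{s_i',t_i'}}`. -/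
theorem multicut_gadget_equivalence [Fintype V]
    (G : SimpleGraph V) (r p : ℕ) (sv tv : Fin r → V) :
    (∃ X : Finset (Sym2 V), ↑X ⊆ G.edgeSet ∧ X.card ≤ p ∧
        ∀ i : Fin r, ¬ (G.deleteEdges ↑X).Reachable (sv i) (tv i)) ↔
    (∃ X' : Finset (Sym2 (GadgetV V r p)),
        ↑X' ⊆ (gadgetGraph G r p sv tv).edgeSet ∧ X'.card ≤ p ∧
        ∀ i : Fin r, ¬ ((gadgetGraph G r p sv tv).deleteEdges ↑X').Reachable
          (Sum.inr (Sum.inl (i, false))) (Sum.inr (Sum.inl (i, true)))) := by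
  classical
  constructor
  · rintro ⟨X, hXsub, hXcard, hXcut⟩
    refine ⟨X.image (Sym2.map Sum.inl), ?_, ?_, ?_⟩
    · intro e' he'
      obtain ⟨e, he, rfl⟩ := Finset.mem_image.1 (Finset.mem_coe.1 he')
      induction e with
      | h u w =>
        have hadj : G.Adj u w := hXsub (Finset.mem_coe.2 he)
        rw [Sym2.map_pair_eq, SimpleGraph.mem_edgeSet, gadgetGraph,
          SimpleGraph.fromRel_adj]
        exact ⟨by simp [hadj.ne], Or.inl (Or.inl ⟨u, w, rfl, rfl, hadj⟩)⟩
    · exact le_trans Finset.card_image_le hXcard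
    · intro i hr
      exact hXcut i (by simpa [gProj] using gadget_proj_reach hr)
  · rintro ⟨X', hX'sub, hX'card, hX'cut⟩
    refine ⟨G.edgeFinset.filter (fun e => Sym2.map Sum.inl e ∈ X'), ?_, ?_, ?_⟩
    · intro e he
      have := (Finset.mem_filter.1 (Finset.mem_coe.1 he)).1
      rwa [SimpleGraph.mem_edgeFinset] at this
    · refine le_trans (Finset.card_le_card_of_injOn (Sym2.map Sum.inl)
        (fun e he => (Finset.mem_filter.1 he).2) ?_) hX'card
      exact (Sym2.map.injective Sum.inl_injective).injOn
    · intro i hreach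
      have hs := gadget_term_reach (G := G) (sv := sv) (tv := tv) hX'card i false
      have ht := gadget_term_reach (G := G) (sv := sv) (tv := tv) hX'card i true
      simp only [Bool.cond_false, if_neg Bool.false_ne_true] at hs
      simp only [if_pos rfl] at ht
      have hlift := gadget_lift_reach (sv := sv) (tv := tv)
        (X' := X') (fun u w hadj hnm hx => hnm (Finset.mem_filter.2
          ⟨SimpleGraph.mem_edgeFinset.2 ((SimpleGraph.mem_edgeSet G).2 hadj),
            by simpa [Sym2.map_pair_eq] using hx⟩)) hreach
      exact hX'cut i (hs.trans (hlift.trans ht.symm))
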